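/- Fix an integer m ≥ 1. Let A₀, A₁, A₀₁ be commutative rings with homomorphisms α₀ : A₀ → A₀₁ and α₁ : A₁ → A₀₁, and let A = {(a₀, a₁) ∈ A₀ × A₁ : α₀(a₀) = α₁(a₁)} be the fiber product ring; likewise let B₀, B₁, B₀₁ with β₀, β₁ have fiber product B. Let φ₀ : A₀ → B₀, φ₁ : A₁ → B₁, φ₀₁ : A₀₁ → B₀₁ be ring homomorphisms satisfying β₀ ∘ φ₀ = φ₀₁ ∘ α₀ and β₁ ∘ φ₁ = φ₀₁ ∘ α₁, and let φ : A → B be the induced homomorphism. If each of φ₀, φ₁, φ₀₁ belongs to the class W(m), then φ belongs to W(m). -/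

import Mathlib

/-- The multiplicative set of integers coprime to `p`. -/
def intCoprime (p : ℕ) : Submonoid ℤ where
  carrier := {n : ℤ | IsCoprime n (p : ℤ)}
  one_mem' := isCoprime_one_left
  mul_mem' := fun ha hb => IsCoprime.mul_left ha hb

/-- The image in a commutative ring `A` of the multiplicative set of integers coprime to `p`. -/
def intCoprimeIn (p : ℕ) (A : Type*) [CommRing A] : Submonoid A :=
  (intCoprime p).map (Int.castRingHom A).toMonoidHom

/-- The localization of `A` at the multiplicative set of integers coprime to `p`,
i.e. `A ⊗_ℤ ℤ₍ₚ₎`. -/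
abbrev LocAt (p : ℕ) (A : Type*) [CommRing A] := Localization (intCoprimeIn p A)

/-- The homomorphism between the localizations at `p` induced by `f : A →+* B`. -/
noncomputable def locMap (p : ℕ) {A B : Type*} [CommRing A] [CommRing B] (f : A →+* B) :
    LocAt p A →+* LocAt p B :=
  IsLocalization.map (M := intCoprimeIn p A) (T := intCoprimeIn p B)
      (Localization (intCoprimeIn p B)) f
    (by
      intro a ha
      obtain ⟨n, hn, rfl⟩ := (Submonoid.mem_map (f := (Int.castRingHom A).toMonoidHom)).mp ha
      exact Submonoid.mem_comap.mpr
        ((Submonoid.mem_map (f := (Int.castRingHom B).toMonoidHom)).mpr ⟨n, hn, by simp⟩))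

/-- A uniform `F_p`-isomorphism: there are `M ≥ 1` and `m₀ ≥ 0` such that `x ^ M = 0` for
every element `x` of the kernel and `y ^ (p ^ m₀)` lies in the image for every `y` in the
target. -/
def IsUniformFpIso (p : ℕ) {R S : Type*} [CommRing R] [CommRing S] (g : R →+* S) : Prop :=
  ∃ M : ℕ, 1 ≤ M ∧ ∃ m₀ : ℕ,
    (∀ x ∈ RingHom.ker g, x ^ M = 0) ∧ ∀ y : S, y ^ p ^ m₀ ∈ Set.range g

/-- The class `W(m)`: the kernel and cokernel of `f` are annihilated by a power of `m`,
and for every prime `p` the induced map of localizations at `p` is a uniform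
`F_p`-isomorphism. -/
def MemW (m : ℕ) {R S : Type*} [CommRing R] [CommRing S] (f : R →+* S) : Prop :=
  (∃ k : ℕ, (∀ x ∈ RingHom.ker f, (m : R) ^ k * x = 0) ∧
    ∀ s : S, (m : S) ^ k * s ∈ Set.range f) ∧
  ∀ p : ℕ, p.Prime → IsUniformFpIso p (locMap p f)

/-- The fiber product `{(a₀, a₁) : α₀ a₀ = α₁ a₁}` of two ring homomorphisms, as a subring
of the product. -/
def fiberProduct {A₀ A₁ A₀₁ : Type*} [CommRing A₀] [CommRing A₁] [CommRing A₀₁]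
    (α₀ : A₀ →+* A₀₁) (α₁ : A₁ →+* A₀₁) : Subring (A₀ × A₁) :=
  RingHom.eqLocus (α₀.comp (RingHom.fst A₀ A₁)) (α₁.comp (RingHom.snd A₀ A₁))

/-- The homomorphism between fiber products induced by a map of cospans. -/
def fiberMap {A₀ A₁ A₀₁ B₀ B₁ B₀₁ : Type*}
    [CommRing A₀] [CommRing A₁] [CommRing A₀₁] [CommRing B₀] [CommRing B₁] [CommRing B₀₁]
    (α₀ : A₀ →+* A₀₁) (α₁ : A₁ →+* A₀₁) (β₀ : B₀ →+* B₀₁) (β₁ : B₁ →+* B₀₁)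
    (φ₀ : A₀ →+* B₀) (φ₁ : A₁ →+* B₁) (φ₀₁ : A₀₁ →+* B₀₁)
    (h₀ : β₀.comp φ₀ = φ₀₁.comp α₀) (h₁ : β₁.comp φ₁ = φ₀₁.comp α₁) :
    fiberProduct α₀ α₁ →+* fiberProduct β₀ β₁ :=
  RingHom.restrict (φ₀.prodMap φ₁) (fiberProduct α₀ α₁) (fiberProduct β₀ β₁)
    (fun x hx => by
      have hx' : α₀ x.1 = α₁ x.2 := hx
      show β₀ (φ₀ x.1) = β₁ (φ₁ x.2)
      rw [← RingHom.comp_apply, h₀, ← RingHom.comp_apply, h₁, RingHom.comp_apply,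
        RingHom.comp_apply, hx'])


open Finset in
lemma frob_pow_eq {R : Type*} [CommRing R] {p : ℕ} (hp : p.Prime) (s : ℕ) :
    ∀ (c : ℕ) (A D : R), (p : R) ^ c * D = 0 → D ^ p ^ s = 0 →
      (A + D) ^ p ^ (c * s) = A ^ p ^ (c * s) := by
  intro c
  induction c with
  | zero =>
    intro A D h1 h2
    have hD : D = 0 := by simpa using h1
    simp [hD]
  | succ c ih =>
    intro A D h1 h2
    have hexp : (A + D) ^ p ^ s =
        A ^ p ^ s + D ^ p ^ s + p * ∑ k ∈ Finset.Ioo 0 (p ^ s),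
          A ^ k * D ^ (p ^ s - k) * ((p ^ s).choose k / p : ℕ) :=
      (Commute.all A D).add_pow_prime_pow_eq' hp s
    rw [h2, add_zero] at hexp
    set S' : R := ∑ k ∈ Finset.Ioo 0 (p ^ s),
        A ^ k * D ^ (p ^ s - k - 1) * ((p ^ s).choose k / p : ℕ) with hS'
    have hsum : ∑ k ∈ Finset.Ioo 0 (p ^ s),
        A ^ k * D ^ (p ^ s - k) * ((p ^ s).choose k / p : ℕ) = D * S' := by
      rw [hS', Finset.mul_sum]
      refine Finset.sum_congr rfl fun k hk => ?_
      rw [Finset.mem_Ioo] at hk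
      have hk' : p ^ s - k = (p ^ s - k - 1) + 1 := by
        have := Nat.one_le_two_pow (n := 1)
        omega
      conv_lhs => rw [hk', pow_succ]
      ring
    rw [hsum] at hexp
    set E : R := (p : R) * (D * S') with hE
    have hE1 : (p : R) ^ c * E = 0 := by
      have h' : (p : R) ^ c * E = ((p : R) ^ (c + 1) * D) * S' := by rw [hE]; ring
      rw [h', h1, zero_mul]
    have hE2 : E ^ p ^ s = 0 := by
      have h' : E ^ p ^ s = (p : R) ^ p ^ s * S' ^ p ^ s * D ^ p ^ s := by rw [hE]; ring
      rw [h', h2, mul_zero]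
    have key := ih (A ^ p ^ s) E hE1 hE2
    rw [← hexp] at key
    have e1 : (c + 1) * s = s + c * s := by ring
    calc (A + D) ^ p ^ ((c + 1) * s)
        = ((A + D) ^ p ^ s) ^ p ^ (c * s) := by rw [← pow_mul, ← pow_add, e1]
      _ = (A ^ p ^ s) ^ p ^ (c * s) := key
      _ = A ^ p ^ ((c + 1) * s) := by rw [← pow_mul, ← pow_add, e1]

section LocHelpers

variable {p : ℕ}

lemma mem_intCoprimeIn {A : Type*} [CommRing A] {n : ℤ} (hn : IsCoprime n (p : ℤ)) :
    ((n : ℤ) : A) ∈ intCoprimeIn p A :=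
  ⟨n, hn, by simp⟩

lemma map_mem_intCoprimeIn {A B : Type*} [CommRing A] [CommRing B] (f : A →+* B)
    {x : A} (hx : x ∈ intCoprimeIn p A) : f x ∈ intCoprimeIn p B := by
  obtain ⟨n, hn, rfl⟩ := hx
  exact ⟨n, hn, by simp⟩

lemma locMap_mk {A B : Type*} [CommRing A] [CommRing B] (f : A →+* B)
    (a : A) (s : intCoprimeIn p A) :
    locMap p f (Localization.mk a s) =
      Localization.mk (f a) ⟨f s, map_mem_intCoprimeIn f s.2⟩ := by
  rw [Localization.mk_eq_mk'_apply, Localization.mk_eq_mk'_apply]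
  exact IsLocalization.map_mk' _ _ _

lemma locMap_algebraMap {A B : Type*} [CommRing A] [CommRing B] (f : A →+* B) (a : A) :
    locMap p f (algebraMap A (LocAt p A) a) = algebraMap B (LocAt p B) (f a) :=
  IsLocalization.map_eq _ _

lemma algebraMap_eq_zero_iff' {A : Type*} [CommRing A] (a : A) :
    algebraMap A (LocAt p A) a = 0 ↔ ∃ n : ℤ, IsCoprime n (p : ℤ) ∧ (n : A) * a = 0 := by
  rw [IsLocalization.map_eq_zero_iff (intCoprimeIn p A)]
  constructor
  · rintro ⟨⟨x, n, hn, rfl⟩, h⟩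
    exact ⟨n, hn, by simpa using h⟩
  · rintro ⟨n, hn, h⟩
    exact ⟨⟨(n : A), n, hn, by simp⟩, by simpa using h⟩

lemma loc_mk_eq_zero_iff {A : Type*} [CommRing A] (a : A) (s : intCoprimeIn p A) :
    Localization.mk a s = 0 ↔ ∃ n : ℤ, IsCoprime n (p : ℤ) ∧ (n : A) * a = 0 := by
  rw [Localization.mk_eq_mk'_apply, IsLocalization.mk'_eq_zero_iff]
  constructor
  · rintro ⟨⟨x, n, hn, rfl⟩, h⟩
    exact ⟨n, hn, by simpa using h⟩
  · rintro ⟨n, hn, h⟩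
    exact ⟨⟨(n : A), n, hn, by simp⟩, by simpa using h⟩

lemma loc_mk_one_eq_algebraMap {A : Type*} [CommRing A] (a : A) :
    Localization.mk a (1 : intCoprimeIn p A) = algebraMap A (LocAt p A) a :=
  Localization.mk_one_eq_algebraMap a

lemma loc_mk_surj {A : Type*} [CommRing A] (x : LocAt p A) :
    ∃ (a : A) (s : intCoprimeIn p A), Localization.mk a s = x :=
  Localization.induction_on x fun y => ⟨y.1, y.2, rfl⟩

lemma loc_range_helper {A B : Type*} [CommRing A] [CommRing B] (f : A →+* B)
    {n₀ : ℕ} (hsur : ∀ y : LocAt p B, y ^ p ^ n₀ ∈ Set.range (locMap p f))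
    (b : B) {n : ℕ} (hn : n₀ ≤ n) :
    ∃ (c : ℤ) (x : A), IsCoprime c (p : ℤ) ∧ f x = (c : B) * b ^ p ^ n := by
  obtain ⟨ζ, hζ⟩ := hsur (algebraMap B (LocAt p B) b)
  have h2 : locMap p f (ζ ^ p ^ (n - n₀)) = algebraMap B (LocAt p B) (b ^ p ^ n) := by
    rw [map_pow, hζ, ← pow_mul, ← pow_add, map_pow]
    congr 2
    omega
  obtain ⟨a, s, hmk⟩ := loc_mk_surj (p := p) (ζ ^ p ^ (n - n₀))
  rw [← hmk, locMap_mk, ← loc_mk_one_eq_algebraMap, Localization.mk_eq_mk_iff,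
    Localization.r_iff_exists] at h2
  obtain ⟨c, hc⟩ := h2
  obtain ⟨rc, hrc, hrcv⟩ := c.2
  obtain ⟨q, hq, hqv⟩ := s.2
  refine ⟨rc * q, (rc : A) * a, (hrc : IsCoprime rc (p:ℤ)).mul_left (hq : IsCoprime q (p:ℤ)), ?_⟩
  simp only at hc
  have hsv : f (s : A) = ((q : ℤ) : B) := by
    rw [← hqv]; simp
  have hcv : (c : B) = ((rc : ℤ) : B) := by rw [← hrcv]; simp
  rw [hcv, hsv] at hc
  simp only [OneMemClass.coe_one, one_mul] at hc
  push_cast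
  rw [map_mul, map_intCast, hc]
  ring

lemma loc_nilp_helper {A B : Type*} [CommRing A] [CommRing B] (f : A →+* B) {M : ℕ}
    (hker : ∀ x ∈ RingHom.ker (locMap p f), x ^ M = 0) {d : A} (hd : f d = 0) :
    ∃ v : ℤ, IsCoprime v (p : ℤ) ∧ (v : A) * d ^ M = 0 := by
  have h1 : locMap p f (algebraMap A (LocAt p A) d) = 0 := by
    rw [locMap_algebraMap, hd, map_zero]
  have h2 := hker _ h1
  rw [← map_pow, algebraMap_eq_zero_iff'] at h2
  exact h2

lemma pow_mul_key {R : Type*} [CommRing R] {m j K : ℕ} (hjK : j ≤ K) {z : R}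
    (hz : (m : R) ^ j * z = 0) : (m : R) ^ K * z = 0 := by
  have h : (m : R) ^ K = (m : R) ^ (K - j) * (m : R) ^ j := by
    rw [← pow_add]; congr 1; omega
  rw [h, mul_assoc, hz, mul_zero]

lemma mul_pow_eq_zero_of_le {R : Type*} [CommRing R] {M₀ M : ℕ} (h : M₀ ≤ M) {u x : R}
    (hu : u * x ^ M₀ = 0) : u * x ^ M = 0 := by
  obtain ⟨δ, rfl⟩ := Nat.exists_eq_add_of_le h
  rw [pow_add, ← mul_assoc, hu, zero_mul]

lemma nilp_scale {R : Type*} [CommRing R] {v : ℤ} {d : R} {M : ℕ} (hM : 1 ≤ M)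
    (h : (v : R) * d ^ M = 0) (w : ℤ) : (((w * v : ℤ) : R) * d) ^ M = 0 := by
  obtain ⟨M', rfl⟩ : ∃ M', M = M' + 1 := ⟨M - 1, by omega⟩
  have h1 : (((w * v : ℤ) : R) * d) ^ (M' + 1)
      = ((w : R) ^ (M' + 1) * (v : R) ^ M') * ((v : R) * d ^ (M' + 1)) := by
    push_cast; ring
  rw [h1, h, mul_zero]

lemma range_final {p : ℕ} {A B : Type*} [CommRing A] [CommRing B] (f : A →+* B)
    {b : B} {sb : intCoprimeIn p B} {r N : ℤ} (hr : IsCoprime r (p : ℤ))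
    (hN : IsCoprime N (p : ℤ)) (hsb : (sb : B) = ((r : ℤ) : B))
    {w : A} {P : ℕ} (hw : f w = ((N : ℤ) : B) * b ^ P) :
    (Localization.mk b sb) ^ P ∈ Set.range (locMap p f) := by
  rw [Localization.mk_pow]
  refine ⟨Localization.mk w ⟨((N * r ^ P : ℤ) : A),
    mem_intCoprimeIn (hN.mul_left (hr.pow_left))⟩, ?_⟩
  rw [locMap_mk, Localization.mk_eq_mk_iff, Localization.r_iff_exists]
  refine ⟨1, ?_⟩
  simp only [OneMemClass.coe_one, one_mul]
  show (((sb : B) ^ P : B)) * f w = f ((N * r ^ P : ℤ) : A) * b ^ P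
  rw [map_intCast, hsb, hw]
  push_cast
  ring

end LocHelpers

/-- The class `W(m)` is closed under pullbacks of commutative rings: if `φ₀`, `φ₁`, `φ₀₁`
form a map of cospans all belonging to `W(m)`, then the induced map of fiber products
belongs to `W(m)`. -/
theorem memW_fiberMap (m : ℕ) (hm : 1 ≤ m)
    {A₀ A₁ A₀₁ B₀ B₁ B₀₁ : Type*}
    [CommRing A₀] [CommRing A₁] [CommRing A₀₁] [CommRing B₀] [CommRing B₁] [CommRing B₀₁]
    (α₀ : A₀ →+* A₀₁) (α₁ : A₁ →+* A₀₁) (β₀ : B₀ →+* B₀₁) (β₁ : B₁ →+* B₀₁)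
    (φ₀ : A₀ →+* B₀) (φ₁ : A₁ →+* B₁) (φ₀₁ : A₀₁ →+* B₀₁)
    (h₀ : β₀.comp φ₀ = φ₀₁.comp α₀) (h₁ : β₁.comp φ₁ = φ₀₁.comp α₁)
    (hφ₀ : MemW m φ₀) (hφ₁ : MemW m φ₁) (hφ₀₁ : MemW m φ₀₁) :
    MemW m (fiberMap α₀ α₁ β₀ β₁ φ₀ φ₁ φ₀₁ h₀ h₁) := by
  obtain ⟨⟨k₀, hk₀ker, hk₀sur⟩, hloc₀⟩ := hφ₀
  obtain ⟨⟨k₁, hk₁ker, hk₁sur⟩, hloc₁⟩ := hφ₁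
  obtain ⟨⟨k₀₁, hk₀₁ker, hk₀₁sur⟩, hloc₀₁⟩ := hφ₀₁
  set Φ := fiberMap α₀ α₁ β₀ β₁ φ₀ φ₁ φ₀₁ h₀ h₁ with hΦdef
  have hΦval : ∀ x : fiberProduct α₀ α₁,
      ((Φ x : B₀ × B₁)) = (φ₀ (x : A₀ × A₁).1, φ₁ (x : A₀ × A₁).2) := fun x => rfl
  have hcomm₀ : ∀ z : A₀, β₀ (φ₀ z) = φ₀₁ (α₀ z) := fun z => RingHom.congr_fun h₀ z
  have hcomm₁ : ∀ z : A₁, β₁ (φ₁ z) = φ₀₁ (α₁ z) := fun z => RingHom.congr_fun h₁ z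
  constructor
  · -- integral part
    refine ⟨max k₀ k₁ + k₀₁, ?_, ?_⟩
    · intro x hx
      rw [RingHom.mem_ker] at hx
      have hx' : (Φ x : B₀ × B₁) = 0 := by rw [hx]; rfl
      rw [hΦval, Prod.ext_iff] at hx'
      have e₀ : (m : A₀) ^ k₀ * (x : A₀ × A₁).1 = 0 :=
        hk₀ker _ (by rw [RingHom.mem_ker]; exact hx'.1)
      have e₁ : (m : A₁) ^ k₁ * (x : A₀ × A₁).2 = 0 :=
        hk₁ker _ (by rw [RingHom.mem_ker]; exact hx'.2)
      refine Subtype.ext ?_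
      push_cast
      refine Prod.ext ?_ ?_
      · show (m : A₀) ^ (max k₀ k₁ + k₀₁) * (x : A₀ × A₁).1 = 0
        exact pow_mul_key (by omega) e₀
      · show (m : A₁) ^ (max k₀ k₁ + k₀₁) * (x : A₀ × A₁).2 = 0
        exact pow_mul_key (by omega) e₁
    · intro b
      set K := max k₀ k₁ with hK
      have hb : β₀ (b : B₀ × B₁).1 = β₁ (b : B₀ × B₁).2 := b.2
      have H₀ : ∃ z, φ₀ z = (m : B₀) ^ K * (b : B₀ × B₁).1 := by
        obtain ⟨a₀, ha₀⟩ := hk₀sur (b : B₀ × B₁).1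
        refine ⟨(m : A₀) ^ (K - k₀) * a₀, ?_⟩
        rw [map_mul, map_pow, map_natCast, ha₀, ← mul_assoc, ← pow_add]
        congr 2
        omega
      have H₁ : ∃ z, φ₁ z = (m : B₁) ^ K * (b : B₀ × B₁).2 := by
        obtain ⟨a₁, ha₁⟩ := hk₁sur (b : B₀ × B₁).2
        refine ⟨(m : A₁) ^ (K - k₁) * a₁, ?_⟩
        rw [map_mul, map_pow, map_natCast, ha₁, ← mul_assoc, ← pow_add]
        congr 2
        omega
      obtain ⟨a₀', hφa₀⟩ := H₀
      obtain ⟨a₁', hφa₁⟩ := H₁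
      have hφd : φ₀₁ (α₀ a₀' - α₁ a₁') = 0 := by
        rw [map_sub, ← hcomm₀, ← hcomm₁, hφa₀, hφa₁, map_mul, map_mul, map_pow, map_pow,
          map_natCast, map_natCast, hb, sub_self]
      have htor : (m : A₀₁) ^ k₀₁ * (α₀ a₀' - α₁ a₁') = 0 :=
        hk₀₁ker _ (by rwa [RingHom.mem_ker])
      have hwmem : ((m : A₀) ^ k₀₁ * a₀', (m : A₁) ^ k₀₁ * a₁') ∈ fiberProduct α₀ α₁ := by
        show α₀ ((m : A₀) ^ k₀₁ * a₀') = α₁ ((m : A₁) ^ k₀₁ * a₁')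
        rw [map_mul, map_mul, map_pow, map_pow, map_natCast, map_natCast]
        have hexp : (m : A₀₁) ^ k₀₁ * α₀ a₀' =
            (m : A₀₁) ^ k₀₁ * α₁ a₁' + (m : A₀₁) ^ k₀₁ * (α₀ a₀' - α₁ a₁') := by ring
        rw [hexp, htor, add_zero]
      refine ⟨⟨_, hwmem⟩, Subtype.ext ?_⟩
      rw [hΦval]
      push_cast
      refine Prod.ext ?_ ?_
      · show φ₀ ((m : A₀) ^ k₀₁ * a₀') = (m : B₀) ^ (max k₀ k₁ + k₀₁) * (b : B₀ × B₁).1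
        rw [map_mul, map_pow, map_natCast, hφa₀, ← mul_assoc, ← pow_add, Nat.add_comm]
      · show φ₁ ((m : A₁) ^ k₀₁ * a₁') = (m : B₁) ^ (max k₀ k₁ + k₀₁) * (b : B₀ × B₁).2
        rw [map_mul, map_pow, map_natCast, hφa₁, ← mul_assoc, ← pow_add, Nat.add_comm]
  · -- localized part
    intro p hp
    obtain ⟨M₀, hM₀, n₀, hker₀, hsur₀⟩ := hloc₀ p hp
    obtain ⟨M₁, hM₁, n₁, hker₁, hsur₁⟩ := hloc₁ p hp
    obtain ⟨M₀₁, hM₀₁, n₀₁, hker₀₁, hsur₀₁⟩ := hloc₀₁ p hp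
    refine ⟨max M₀ M₁, le_trans hM₀ (le_max_left _ _),
      max n₀ n₁ + (k₀₁ * m.factorization p) * M₀₁, ?_, ?_⟩
    · -- kernel
      intro x hx
      revert hx
      refine Localization.induction_on x ?_
      rintro ⟨a, s⟩ hx
      rw [RingHom.mem_ker, locMap_mk, loc_mk_eq_zero_iff] at hx
      obtain ⟨q, hq', hqa⟩ := hx
      have hq : IsCoprime q (p : ℤ) := hq'
      have hval : ((q : ℤ) : B₀ × B₁) * ((Φ a : fiberProduct β₀ β₁) : B₀ × B₁) = 0 := by
        have h := congrArg (Subtype.val) hqa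
        push_cast at h
        exact h
      have h0 : φ₀ (((q : ℤ) : A₀) * (a : A₀ × A₁).1) = 0 := by
        rw [map_mul, map_intCast]
        have h := congrArg Prod.fst hval
        rw [hΦval] at h
        exact h
      have h1 : φ₁ (((q : ℤ) : A₁) * (a : A₀ × A₁).2) = 0 := by
        rw [map_mul, map_intCast]
        have h := congrArg Prod.snd hval
        rw [hΦval] at h
        exact h
      obtain ⟨q₀, hq₀', hq₀e⟩ := loc_nilp_helper (p := p) φ₀ hker₀ h0
      obtain ⟨q₁, hq₁', hq₁e⟩ := loc_nilp_helper (p := p) φ₁ hker₁ h1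
      have hq₀ : IsCoprime q₀ (p : ℤ) := hq₀'
      have hq₁ : IsCoprime q₁ (p : ℤ) := hq₁'
      have e₀ : ((q₀ : ℤ) : A₀) * ((((q : ℤ)) : A₀) * (a : A₀ × A₁).1) ^ (max M₀ M₁) = 0 :=
        mul_pow_eq_zero_of_le (le_max_left _ _) hq₀e
      have e₁ : ((q₁ : ℤ) : A₁) * ((((q : ℤ)) : A₁) * (a : A₀ × A₁).2) ^ (max M₀ M₁) = 0 :=
        mul_pow_eq_zero_of_le (le_max_right _ _) hq₁e
      obtain ⟨N, hNcop, hN0, hN1⟩ : ∃ N : ℤ, IsCoprime N (p : ℤ) ∧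
          ((N : ℤ) : A₀) * (a : A₀ × A₁).1 ^ (max M₀ M₁) = 0 ∧
          ((N : ℤ) : A₁) * (a : A₀ × A₁).2 ^ (max M₀ M₁) = 0 := by
        refine ⟨q₀ * q₁ * q ^ (max M₀ M₁), (hq₀.mul_left hq₁).mul_left hq.pow_left, ?_, ?_⟩
        · have hre : ((q₀ * q₁ * q ^ (max M₀ M₁) : ℤ) : A₀) * (a : A₀ × A₁).1 ^ (max M₀ M₁)
              = ((q₁ : ℤ) : A₀) *
                (((q₀ : ℤ) : A₀) * ((((q : ℤ)) : A₀) * (a : A₀ × A₁).1) ^ (max M₀ M₁)) := by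
            push_cast; ring
          rw [hre, e₀, mul_zero]
        · have hre : ((q₀ * q₁ * q ^ (max M₀ M₁) : ℤ) : A₁) * (a : A₀ × A₁).2 ^ (max M₀ M₁)
              = ((q₀ : ℤ) : A₁) *
                (((q₁ : ℤ) : A₁) * ((((q : ℤ)) : A₁) * (a : A₀ × A₁).2) ^ (max M₀ M₁)) := by
            push_cast; ring
          rw [hre, e₁, mul_zero]
      rw [Localization.mk_pow, loc_mk_eq_zero_iff]
      refine ⟨N, hNcop, Subtype.ext ?_⟩
      push_cast
      exact Prod.ext hN0 hN1
    · -- surjectivity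
      intro y
      refine Localization.induction_on y ?_
      rintro ⟨b, sb⟩
      obtain ⟨r, hr', hrv⟩ := sb.2
      have hr : IsCoprime r (p : ℤ) := hr'
      have hb : β₀ (b : B₀ × B₁).1 = β₁ (b : B₀ × B₁).2 := b.2
      obtain ⟨c₀, x₀, hc₀, hx₀⟩ :=
        loc_range_helper (p := p) φ₀ hsur₀ (b : B₀ × B₁).1 (le_max_left n₀ n₁)
      obtain ⟨c₁, x₁, hc₁, hx₁⟩ :=
        loc_range_helper (p := p) φ₁ hsur₁ (b : B₀ × B₁).2 (le_max_right n₀ n₁)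
      -- combine scalars
      obtain ⟨C, X₀, X₁, hC, hX₀, hX₁⟩ : ∃ (C : ℤ) (X₀ : A₀) (X₁ : A₁),
          IsCoprime C (p : ℤ) ∧ φ₀ X₀ = (C : B₀) * (b : B₀ × B₁).1 ^ p ^ (max n₀ n₁) ∧
            φ₁ X₁ = (C : B₁) * (b : B₀ × B₁).2 ^ p ^ (max n₀ n₁) := by
        refine ⟨c₀ * c₁, (c₁ : A₀) * x₀, (c₀ : A₁) * x₁, hc₀.mul_left hc₁, ?_, ?_⟩
        · rw [map_mul, map_intCast, hx₀]; push_cast; ring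
        · rw [map_mul, map_intCast, hx₁]; push_cast; ring
      have hφd : φ₀₁ (α₀ X₀ - α₁ X₁) = 0 := by
        rw [map_sub, ← hcomm₀, ← hcomm₁, hX₀, hX₁, map_mul, map_mul, map_intCast, map_intCast,
          map_pow, map_pow, hb, sub_self]
      obtain ⟨v, hv', hve⟩ := loc_nilp_helper (p := p) φ₀₁ hker₀₁ hφd
      have hv : IsCoprime v (p : ℤ) := hv'
      have htor : (m : A₀₁) ^ k₀₁ * (α₀ X₀ - α₁ X₁) = 0 :=
        hk₀₁ker _ (by rwa [RingHom.mem_ker])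
      -- factor m^k₀₁ = p^c' * w with w coprime to p
      obtain ⟨w, hw, hwfact⟩ : ∃ w : ℤ, IsCoprime w (p : ℤ) ∧
          (m : ℤ) ^ k₀₁ = (p : ℤ) ^ (k₀₁ * m.factorization p) * w := by
        have hm0 : m ≠ 0 := by omega
        have hfact : p ^ m.factorization p * (m / p ^ m.factorization p) = m :=
          Nat.ordProj_mul_ordCompl_eq_self m p
        refine ⟨((m / p ^ m.factorization p : ℕ) : ℤ) ^ k₀₁, ?_, ?_⟩
        · exact IsCoprime.pow_left
            (by rw [Nat.isCoprime_iff_coprime]; exact (Nat.coprime_ordCompl hp hm0).symm)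
        · conv_lhs => rw [← hfact]
          push_cast
          rw [mul_pow, ← pow_mul, Nat.mul_comm]
      have hmkA : (m : A₀₁) ^ k₀₁ = (p : A₀₁) ^ (k₀₁ * m.factorization p) * ((w : ℤ) : A₀₁) := by
        have h := congrArg (fun z : ℤ => ((z : ℤ) : A₀₁)) hwfact
        push_cast at h
        exact h
      obtain ⟨e, he⟩ : ∃ e : ℤ, e = w * v := ⟨w * v, rfl⟩
      have hecop : IsCoprime e (p : ℤ) := he ▸ hw.mul_left hv
      -- torsion and nilpotence of the scaled difference
      have hDtor : (p : A₀₁) ^ (k₀₁ * m.factorization p) *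
          (((e : ℤ) : A₀₁) * (α₀ X₀ - α₁ X₁)) = 0 := by
        have h2 : (p : A₀₁) ^ (k₀₁ * m.factorization p) *
            (((e : ℤ) : A₀₁) * (α₀ X₀ - α₁ X₁)) =
            (v : A₀₁) * ((m : A₀₁) ^ k₀₁ * (α₀ X₀ - α₁ X₁)) := by
          rw [he, hmkA]; push_cast; ring
        rw [h2, htor, mul_zero]
      have hDM : (((e : ℤ) : A₀₁) * (α₀ X₀ - α₁ X₁)) ^ M₀₁ = 0 := by
        rw [he]; exact nilp_scale hM₀₁ hve w
      have hDnil : (((e : ℤ) : A₀₁) * (α₀ X₀ - α₁ X₁)) ^ p ^ M₀₁ = 0 := by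
        have h3 : p ^ M₀₁ = M₀₁ + (p ^ M₀₁ - M₀₁) := by
          have := Nat.lt_pow_self (n := M₀₁) hp.one_lt
          omega
        rw [h3, pow_add, hDM, zero_mul]
      -- Frobenius congruence
      have hsplit : α₀ (((e : ℤ) : A₀) * X₀) =
          α₁ (((e : ℤ) : A₁) * X₁) + ((e : ℤ) : A₀₁) * (α₀ X₀ - α₁ X₁) := by
        rw [map_mul, map_mul, map_intCast, map_intCast]; ring
      have hfr := frob_pow_eq hp M₀₁ (k₀₁ * m.factorization p)
        (α₁ (((e : ℤ) : A₁) * X₁)) (((e : ℤ) : A₀₁) * (α₀ X₀ - α₁ X₁)) hDtor hDnil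
      have hwmem : ((((e : ℤ) : A₀) * X₀) ^ p ^ (k₀₁ * m.factorization p * M₀₁),
          (((e : ℤ) : A₁) * X₁) ^ p ^ (k₀₁ * m.factorization p * M₀₁)) ∈
          fiberProduct α₀ α₁ := by
        show α₀ ((((e : ℤ) : A₀) * X₀) ^ p ^ (k₀₁ * m.factorization p * M₀₁)) =
          α₁ ((((e : ℤ) : A₁) * X₁) ^ p ^ (k₀₁ * m.factorization p * M₀₁))
        rw [map_pow, map_pow, hsplit, hfr]
      -- compute Φ of the candidate
      have hφw0 : φ₀ ((((e : ℤ) : A₀) * X₀) ^ p ^ (k₀₁ * m.factorization p * M₀₁)) =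
          (((e * C) ^ p ^ (k₀₁ * m.factorization p * M₀₁) : ℤ) : B₀) *
            (b : B₀ × B₁).1 ^ p ^ (max n₀ n₁ + k₀₁ * m.factorization p * M₀₁) := by
        have hexp : (b : B₀ × B₁).1 ^ p ^ (max n₀ n₁ + k₀₁ * m.factorization p * M₀₁) =
            ((b : B₀ × B₁).1 ^ p ^ (max n₀ n₁)) ^ p ^ (k₀₁ * m.factorization p * M₀₁) := by
          rw [← pow_mul, ← pow_add]
        rw [hexp, map_pow, map_mul, map_intCast, hX₀]
        push_cast
        ring
      have hφw1 : φ₁ ((((e : ℤ) : A₁) * X₁) ^ p ^ (k₀₁ * m.factorization p * M₀₁)) =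
          (((e * C) ^ p ^ (k₀₁ * m.factorization p * M₀₁) : ℤ) : B₁) *
            (b : B₀ × B₁).2 ^ p ^ (max n₀ n₁ + k₀₁ * m.factorization p * M₀₁) := by
        have hexp : (b : B₀ × B₁).2 ^ p ^ (max n₀ n₁ + k₀₁ * m.factorization p * M₀₁) =
            ((b : B₀ × B₁).2 ^ p ^ (max n₀ n₁)) ^ p ^ (k₀₁ * m.factorization p * M₀₁) := by
          rw [← pow_mul, ← pow_add]
        rw [hexp, map_pow, map_mul, map_intCast, hX₁]
        push_cast
        ring
      -- package the scalar opaquely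
      obtain ⟨Q, hQcop, hQ0, hQ1⟩ : ∃ Q : ℤ, IsCoprime Q (p : ℤ) ∧
          φ₀ ((((e : ℤ) : A₀) * X₀) ^ p ^ (k₀₁ * m.factorization p * M₀₁)) =
            ((Q : ℤ) : B₀) *
              (b : B₀ × B₁).1 ^ p ^ (max n₀ n₁ + k₀₁ * m.factorization p * M₀₁) ∧
          φ₁ ((((e : ℤ) : A₁) * X₁) ^ p ^ (k₀₁ * m.factorization p * M₀₁)) =
            ((Q : ℤ) : B₁) *
              (b : B₀ × B₁).2 ^ p ^ (max n₀ n₁ + k₀₁ * m.factorization p * M₀₁) :=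
        ⟨(e * C) ^ p ^ (k₀₁ * m.factorization p * M₀₁),
          (hecop.mul_left hC).pow_left, hφw0, hφw1⟩
      have hΦw : Φ ⟨_, hwmem⟩ = ((Q : ℤ) : fiberProduct β₀ β₁) *
          b ^ p ^ (max n₀ n₁ + k₀₁ * m.factorization p * M₀₁) := by
        refine Subtype.ext ?_
        rw [hΦval]
        push_cast
        exact Prod.ext hQ0 hQ1
      have hsbv : ((sb : fiberProduct β₀ β₁)) = ((r : ℤ) : fiberProduct β₀ β₁) := by
        rw [← hrv]; simp
      exact range_final (p := p) Φ hr hQcop hsbv hΦw
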